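/- Let r > 1 and let j be a positive integer. Writing N_j for the set of positive integers with no prime factor ≤ p_j, the closure of σ_{-r}(N_{j-1}) equals the union over a ∈ ℕ ∪ {∞} of σ_{-r}(p_j^a) · Cl(σ_{-r}(N_j)), where σ_{-r}(p_j^∞) := 1/(1 - p_j^{-r}) and c · X := {c x : x ∈ X}. -/

import Mathlib

open Filter Topology Finset

noncomputable def sigma' (r : ℝ) (n : ℕ) : ℝ := ∑ d ∈ n.divisors, (d : ℝ) ^ (-r)

/-- `Nset j` is the set of positive integers with no prime factor `≤ p_j`; `Nset 0 = ℕ⁺`. -/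
def Nset (j : ℕ) : Set ℕ := {n | 0 < n ∧ ∀ k < j, ¬ Nat.nth Nat.Prime k ∣ n}

private lemma sigma'_mul_coprime (r : ℝ) (hr : 0 < r) {m n : ℕ} (h : m.Coprime n) :
    sigma' r (m * n) = sigma' r m * sigma' r n := by
  let F : ArithmeticFunction ℝ :=
    ⟨fun n => (n : ℝ) ^ (-r), by simp [Real.zero_rpow (by linarith : -r ≠ 0)]⟩
  have hF : F.IsMultiplicative := by
    constructor
    · simp [F]
    · intro a b _
      show ((a * b : ℕ) : ℝ) ^ (-r) = ((a : ℝ) ^ (-r)) * ((b : ℝ) ^ (-r))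
      push_cast
      rw [Real.mul_rpow (by positivity) (by positivity)]
  have key := ((ArithmeticFunction.isMultiplicative_zeta.natCast.mul hF)).map_mul_of_coprime h
  simp only [ArithmeticFunction.coe_zeta_mul_apply] at key
  exact key

private lemma sigma'_prime_pow (r : ℝ) {p : ℕ} (hp : p.Prime) (a : ℕ) :
    sigma' r (p ^ a) = ∑ i ∈ Finset.range (a + 1), ((p : ℝ) ^ (-r)) ^ i := by
  unfold sigma'
  rw [Nat.sum_divisors_prime_pow hp]
  refine Finset.sum_congr rfl fun i _ => ?_
  have hp0 : (0:ℝ) ≤ (p : ℝ) := by positivity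
  push_cast
  rw [← Real.rpow_natCast ((p:ℝ) ^ (-r)) i, ← Real.rpow_natCast (p:ℝ) i,
    ← Real.rpow_mul hp0, ← Real.rpow_mul hp0, mul_comm]

private lemma one_le_sigma'_prime_pow (r : ℝ) {p : ℕ} (hp : p.Prime) (a : ℕ) :
    1 ≤ sigma' r (p ^ a) := by
  rw [sigma'_prime_pow r hp a]
  have h0 : ((p : ℝ) ^ (-r)) ^ 0 = 1 := pow_zero _
  calc (1:ℝ) = ((p : ℝ) ^ (-r)) ^ 0 := h0.symm
    _ ≤ ∑ i ∈ Finset.range (a + 1), ((p : ℝ) ^ (-r)) ^ i := by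
        apply Finset.single_le_sum (f := fun i => ((p : ℝ) ^ (-r)) ^ i)
        · intro i _
          positivity
        · exact Finset.mem_range.2 (Nat.succ_pos a)

private lemma mem_Nset_succ {j : ℕ} (hj : 1 ≤ j) (n : ℕ) :
    n ∈ Nset (j - 1) ↔ ∃ a m, m ∈ Nset j ∧ n = Nat.nth Nat.Prime (j - 1) ^ a * m := by
  set p := Nat.nth Nat.Prime (j - 1) with hpdef
  have hp : p.Prime := Nat.prime_nth_prime _
  constructor
  · rintro ⟨hn, hnd⟩
    refine ⟨n.factorization p, n / p ^ n.factorization p, ⟨Nat.ordCompl_pos p hn.ne', ?_⟩,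
      (Nat.ordProj_mul_ordCompl_eq_self n p).symm⟩
    intro k hk hdvd
    rcases eq_or_lt_of_le (Nat.le_sub_one_of_lt hk) with h | h
    · rw [h] at hdvd
      exact Nat.not_dvd_ordCompl hp hn.ne' hdvd
    · exact hnd k h (hdvd.trans (Nat.ordCompl_dvd n p))
  · rintro ⟨a, m, ⟨hm, hmd⟩, rfl⟩
    refine ⟨Nat.mul_pos (pow_pos hp.pos a) hm, fun k hk hdvd => ?_⟩
    have hk' : k < j := by omega
    have hpk : (Nat.nth Nat.Prime k).Prime := Nat.prime_nth_prime _
    have hne : Nat.nth Nat.Prime k ≠ p := by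
      have := (Nat.nth_lt_nth Nat.infinite_setOf_prime).2 (show k < j - 1 from hk)
      exact this.ne
    rcases hpk.dvd_mul.1 hdvd with hdp | hdm
    · exact hne ((Nat.prime_dvd_prime_iff_eq hpk hp).1 (hpk.dvd_of_dvd_pow hdp))
    · exact hmd k hk' hdm

private lemma image_Nset (r : ℝ) (hr : 0 < r) {j : ℕ} (hj : 1 ≤ j) :
    sigma' r '' Nset (j - 1) =
      ⋃ a : ℕ, (fun x => sigma' r (Nat.nth Nat.Prime (j - 1) ^ a) * x) ''
        (sigma' r '' Nset j) := by
  set p := Nat.nth Nat.Prime (j - 1) with hpdef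
  have hp : p.Prime := Nat.prime_nth_prime _
  have hcop : ∀ a : ℕ, ∀ m ∈ Nset j, (p ^ a).Coprime m := by
    intro a m hm
    exact Nat.Coprime.pow_left a
      (hp.coprime_iff_not_dvd.2 (hm.2 (j - 1) (by omega)))
  ext x
  simp only [Set.mem_iUnion, Set.mem_image]
  constructor
  · rintro ⟨n, hn, rfl⟩
    obtain ⟨a, m, hm, rfl⟩ := (mem_Nset_succ hj n).1 hn
    exact ⟨a, sigma' r m, ⟨m, hm, rfl⟩, (sigma'_mul_coprime r hr (hcop a m hm)).symm⟩
  · rintro ⟨a, y, ⟨m, hm, rfl⟩, rfl⟩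
    exact ⟨p ^ a * m, (mem_Nset_succ hj _).2 ⟨a, m, hm, rfl⟩,
      sigma'_mul_coprime r hr (hcop a m hm)⟩

private lemma closure_iUnion_mul {c : ℕ → ℝ} {L : ℝ} (hc : ∀ a, 1 ≤ c a)
    (hL : Tendsto c atTop (𝓝 L)) (S : Set ℝ) :
    closure (⋃ a, (fun x => c a * x) '' S) =
      (⋃ a, (fun x => c a * x) '' closure S) ∪ ((fun x => L * x) '' closure S) := by
  have hL1 : (1 : ℝ) ≤ L := ge_of_tendsto hL (Eventually.of_forall hc)
  have hLne : L ≠ 0 := by linarith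
  apply Set.Subset.antisymm
  · intro x hx
    obtain ⟨u, hu, hux⟩ := mem_closure_iff_seq_limit.1 hx
    have hchoice : ∀ n, ∃ a s, s ∈ S ∧ u n = c a * s := by
      intro n
      obtain ⟨a, s, hs, hsu⟩ := Set.mem_iUnion.1 (hu n)
      exact ⟨a, s, hs, hsu.symm⟩
    choose a s hs hus using hchoice
    by_cases hbd : ∃ A, ∃ᶠ n in atTop, a n = A
    · obtain ⟨A, hA⟩ := hbd
      obtain ⟨φ, hφ, hφA⟩ := Filter.extraction_of_frequently_atTop hA
      left
      have hcA : c A ≠ 0 := by have := hc A; linarith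
      refine Set.mem_iUnion.2 ⟨A, x / c A, ?_, by field_simp⟩
      refine mem_closure_iff_seq_limit.2 ⟨fun n => s (φ n), fun n => hs _, ?_⟩
      have h1 : Tendsto (fun n => u (φ n)) atTop (𝓝 x) := hux.comp hφ.tendsto_atTop
      have h2 : Tendsto (fun n => u (φ n) / c A) atTop (𝓝 (x / c A)) := h1.div_const (c A)
      refine h2.congr fun n => ?_
      rw [hus (φ n), hφA n]
      field_simp
    · right
      push_neg at hbd
      have ha : Tendsto a atTop atTop := by
        refine tendsto_atTop.2 fun A => ?_
        have h2 : ∀ᶠ n in atTop, ∀ B ∈ Finset.range A, a n ≠ B :=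
          (Filter.eventually_all_finset (Finset.range A)).2
            fun B _ => hbd B
        filter_upwards [h2] with n hn
        by_contra h
        push_neg at h
        exact hn (a n) (Finset.mem_range.2 h) rfl
      have hcL : Tendsto (fun n => c (a n)) atTop (𝓝 L) := hL.comp ha
      have hsx : Tendsto s atTop (𝓝 (x / L)) := by
        have h3 : Tendsto (fun n => u n / c (a n)) atTop (𝓝 (x / L)) := hux.div hcL hLne
        refine h3.congr fun n => ?_
        have hca : c (a n) ≠ 0 := by have := hc (a n); linarith
        rw [hus n]
        field_simp
      exact ⟨x / L, mem_closure_iff_seq_limit.2 ⟨s, hs, hsx⟩,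
        by field_simp⟩
  · rintro x (hx | hx)
    · obtain ⟨A, hA⟩ := Set.mem_iUnion.1 hx
      have h1 : (fun x => c A * x) '' closure S ⊆ closure ((fun x => c A * x) '' S) :=
        image_closure_subset_closure_image (continuous_const.mul continuous_id)
      exact closure_mono (Set.subset_iUnion (fun a => (fun x => c a * x) '' S) A) (h1 hA)
    · obtain ⟨y, hy, rfl⟩ := hx
      have hmem : ∀ n, c n * y ∈ closure (⋃ a, (fun x => c a * x) '' S) := fun n =>
        closure_mono (Set.subset_iUnion (fun a => (fun x => c a * x) '' S) n)
          (image_closure_subset_closure_image (continuous_const.mul continuous_id) ⟨y, hy, rfl⟩)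
      have htd : Tendsto (fun n => c n * y) atTop (𝓝 (L * y)) := hL.mul_const y
      exact isClosed_closure.mem_of_tendsto htd (Eventually.of_forall hmem)

theorem stmt11 (r : ℝ) (hr : 1 < r) (j : ℕ) (hj : 1 ≤ j) :
    closure (sigma' r '' Nset (j - 1)) =
      (⋃ a : ℕ, (fun x => sigma' r (Nat.nth Nat.Prime (j - 1) ^ a) * x) ''
          closure (sigma' r '' Nset j)) ∪
        ((fun x => (1 - (Nat.nth Nat.Prime (j - 1) : ℝ) ^ (-r))⁻¹ * x) ''
          closure (sigma' r '' Nset j)) := by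
  set p := Nat.nth Nat.Prime (j - 1) with hpdef
  have hp : p.Prime := Nat.prime_nth_prime _
  have hr0 : (0 : ℝ) < r := by linarith
  set q : ℝ := (p : ℝ) ^ (-r) with hqdef
  have hq0 : 0 ≤ q := by positivity
  have hq1 : q < 1 :=
    Real.rpow_lt_one_of_one_lt_of_neg (by exact_mod_cast hp.one_lt) (by linarith)
  have hgeo : Tendsto (fun a : ℕ => ∑ i ∈ Finset.range (a + 1), q ^ i) atTop
      (𝓝 (1 - q)⁻¹) :=
    (hasSum_geometric_of_lt_one hq0 hq1).tendsto_sum_nat.comp (tendsto_add_atTop_nat 1)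
  have hcL : Tendsto (fun a : ℕ => sigma' r (p ^ a)) atTop (𝓝 (1 - q)⁻¹) := by
    refine hgeo.congr fun a => (sigma'_prime_pow r hp a).symm
  rw [image_Nset r hr0 hj,
    closure_iUnion_mul (fun a => one_le_sigma'_prime_pow r hp a) hcL]
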